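/- For positive integers n, k, ν, m with k < n and ν < n, the following integral identity holds: ∫_{1/(ν+1)}^{1/ν} x^m (1−kx)^{n−2} dx = ∑_{μ=0}^{m} (1/k^μ) · (m!(n−2)!)/((m−μ)!(n+μ−2)!) · T_{n+μ,k,ν,m−μ}, where T_{n+μ,k,ν,m−μ} = (1/(k(n+μ−1))) · ( (ν+1−k)^{n+μ−1}/(ν+1)^{n+m−1} − (ν−k)^{n+μ−1}/ν^{n+m−1} ). -/

import Mathlib

open Finset

private lemma hd_aux (K : ℝ) (hK : K ≠ 0) (p : ℕ) (x : ℝ) :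
    HasDerivAt (fun y => -(1 - K * y) ^ (p + 1) / (K * ((p : ℝ) + 1)))
      ((1 - K * x) ^ p) x := by
  have h1 : HasDerivAt (fun y : ℝ => 1 - K * y) (-K) x := by
    simpa using ((hasDerivAt_id x).const_mul K).const_sub 1
  have h2 := ((h1.pow (p + 1)).neg).div_const (K * ((p : ℝ) + 1))
  have hp : (p : ℝ) + 1 ≠ 0 := by positivity
  refine h2.congr_deriv ?_
  simp only [Nat.add_sub_cancel]
  push_cast
  field_simp

private lemma integ_aux (K c : ℝ) (p m : ℕ) (a b : ℝ) :
    IntervalIntegrable (fun x => x ^ m * (1 - K * x) ^ p) MeasureTheory.volume a b := by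
  apply Continuous.intervalIntegrable
  fun_prop

private lemma aux (K c : ℝ) (hK : K ≠ 0) (hc : 0 < c) : ∀ m p : ℕ,
    ∫ x in (1 / (c + 1))..(1 / c), x ^ m * (1 - K * x) ^ p =
      ∑ μ ∈ Finset.range (m + 1),
        (1 / K ^ μ) *
          ((m.factorial * p.factorial : ℝ) /
            ((m - μ).factorial * (p + μ).factorial)) *
          ((1 / (K * ((p : ℝ) + μ + 1))) *
            ((c + 1 - K) ^ (p + μ + 1) / (c + 1) ^ (p + m + 1) -
              (c - K) ^ (p + μ + 1) / c ^ (p + m + 1))) := by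
  intro m
  induction m with
  | zero =>
    intro p
    have hc' : c ≠ 0 := ne_of_gt hc
    have hc1 : c + 1 ≠ 0 := by positivity
    have hp : (p : ℝ) + 1 ≠ 0 := by positivity
    have hint := intervalIntegral.integral_eq_sub_of_hasDerivAt
      (f := fun y => -(1 - K * y) ^ (p + 1) / (K * ((p : ℝ) + 1)))
      (f' := fun x => (1 - K * x) ^ p)
      (a := 1 / (c + 1)) (b := 1 / c)
      (fun x _ => hd_aux K hK p x)
      (by apply Continuous.intervalIntegrable; fun_prop)
    have e1 : 1 - K * (1 / c) = (c - K) / c := by field_simp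
    have e2 : 1 - K * (1 / (c + 1)) = (c + 1 - K) / (c + 1) := by field_simp
    simp only [pow_zero, one_mul] at *
    rw [hint, e1, e2, div_pow, div_pow]
    simp only [zero_add, Finset.sum_range_one, Nat.factorial_zero, Nat.sub_zero, Nat.add_zero]
    push_cast
    field_simp
    ring
  | succ m ih =>
    intro p
    have hc' : c ≠ 0 := ne_of_gt hc
    have hc1 : c + 1 ≠ 0 := by positivity
    have hp : (p : ℝ) + 1 ≠ 0 := by positivity
    -- integration by parts
    have hibp := intervalIntegral.integral_mul_deriv_eq_deriv_mul
      (u := fun x : ℝ => x ^ (m + 1)) (u' := fun x : ℝ => ((m : ℝ) + 1) * x ^ m)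
      (v := fun y => -(1 - K * y) ^ (p + 1) / (K * ((p : ℝ) + 1)))
      (v' := fun x => (1 - K * x) ^ p)
      (a := 1 / (c + 1)) (b := 1 / c)
      (fun x _ => by simpa using (hasDerivAt_pow (m + 1) x))
      (fun x _ => hd_aux K hK p x)
      (by apply Continuous.intervalIntegrable; fun_prop)
      (by apply Continuous.intervalIntegrable; fun_prop)
    have hconst : (fun x : ℝ => ((m : ℝ) + 1) * x ^ m *
        (-(1 - K * x) ^ (p + 1) / (K * ((p : ℝ) + 1)))) =
        fun x : ℝ => (-((m : ℝ) + 1) / (K * ((p : ℝ) + 1))) *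
          (x ^ m * (1 - K * x) ^ (p + 1)) := by
      funext x; field_simp
    rw [hconst, intervalIntegral.integral_const_mul, ih (p + 1)] at hibp
    have e1 : 1 - K * (1 / c) = (c - K) / c := by field_simp
    have e2 : 1 - K * (1 / (c + 1)) = (c + 1 - K) / (c + 1) := by field_simp
    have hbdy : (1 / c) ^ (m + 1) * (-(1 - K * (1 / c)) ^ (p + 1) / (K * ((p : ℝ) + 1))) -
        (1 / (c + 1)) ^ (m + 1) *
          (-(1 - K * (1 / (c + 1))) ^ (p + 1) / (K * ((p : ℝ) + 1))) =
        (1 / K ^ 0) *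
          (((m + 1).factorial * p.factorial : ℝ) /
            ((m + 1 - 0).factorial * (p + 0).factorial)) *
          ((1 / (K * ((p : ℝ) + 0 + 1))) *
            ((c + 1 - K) ^ (p + 0 + 1) / (c + 1) ^ (p + (m + 1) + 1) -
              (c - K) ^ (p + 0 + 1) / c ^ (p + (m + 1) + 1))) := by
      rw [e1, e2, div_pow, div_pow, div_pow, div_pow]
      simp only [pow_zero, Nat.sub_zero, Nat.add_zero]
      field_simp
      ring
    rw [hibp, hbdy, sub_eq_add_neg]
    conv_rhs => rw [Finset.sum_range_succ', add_comm]
    congr 1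
    · push_cast
      norm_num
    · rw [← neg_mul, Finset.mul_sum]
      refine Finset.sum_congr rfl fun μ _ => ?_
      have h1 : m + 1 - (μ + 1) = m - μ := by omega
      have h2 : p + (μ + 1) = p + 1 + μ := by omega
      have h4 : p + (m + 1) + 1 = p + 1 + m + 1 := by omega
      rw [h1, h2, h4]
      have hf1 : ((m + 1).factorial : ℝ) = ((m : ℝ) + 1) * m.factorial := by
        push_cast [Nat.factorial_succ]; ring
      have hf2 : ((p + 1).factorial : ℝ) = ((p : ℝ) + 1) * p.factorial := by
        push_cast [Nat.factorial_succ]; ring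
      rw [hf1, hf2]
      have hpm : ((p : ℝ) + 1) + μ + 1 ≠ 0 := by positivity
      have hfm : ((m - μ).factorial : ℝ) ≠ 0 := by
        exact_mod_cast Nat.factorial_ne_zero _
      have hfp : ((p + 1 + μ).factorial : ℝ) ≠ 0 := by
        exact_mod_cast Nat.factorial_ne_zero _
      push_cast
      field_simp
      ring

theorem integral_x_pow_mul_one_sub_kx_pow
    (n k ν m : ℕ) (hn : 0 < n) (hk : 0 < k) (hν : 0 < ν) (hm : 0 < m)
    (hkn : k < n) (hνn : ν < n) :
    ∫ x in (1 / ((ν : ℝ) + 1))..(1 / (ν : ℝ)), x ^ m * (1 - k * x) ^ (n - 2) =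
      ∑ μ ∈ Finset.range (m + 1),
        (1 / (k : ℝ) ^ μ) *
          ((m.factorial * (n - 2).factorial : ℝ) /
            ((m - μ).factorial * (n + μ - 2).factorial)) *
          ((1 / ((k : ℝ) * ((n : ℝ) + μ - 1))) *
            (((ν : ℝ) + 1 - k) ^ (n + μ - 1) / ((ν : ℝ) + 1) ^ (n + m - 1) -
              ((ν : ℝ) - k) ^ (n + μ - 1) / (ν : ℝ) ^ (n + m - 1))) := by
  obtain ⟨p, rfl⟩ : ∃ p, n = p + 2 := ⟨n - 2, by omega⟩
  have hK : ((k : ℝ)) ≠ 0 := by positivity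
  have hc : (0 : ℝ) < (ν : ℝ) := by exact_mod_cast hν
  rw [show p + 2 - 2 = p from by omega, aux (k : ℝ) (ν : ℝ) hK hc m p]
  apply Finset.sum_congr rfl
  intro μ _
  have h1 : p + 2 + μ - 2 = p + μ := by omega
  have h2 : p + 2 + μ - 1 = p + μ + 1 := by omega
  have h3 : p + 2 + m - 1 = p + m + 1 := by omega
  rw [h1, h2, h3]
  have h4 : ((p + 2 : ℕ) : ℝ) + μ - 1 = (p : ℝ) + μ + 1 := by push_cast; ring
  rw [h4]
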